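/- (Theorem 1, Part A (i)–(ii)) Suppose Δ < 0. Then ψ̃_Δ has exactly one fixed point β̂ in [βlo, βhi]; this unique Berk–Nash equilibrium belief satisfies β̂ > β*, and ψ̃_Δ crosses the diagonal strictly from above at β̂ (the unique equilibrium is stable). -/

import Mathlib

open Set

/-- `F` crosses the diagonal strictly from above at `x` (within the interval `[a,b]`). -/
def CrossesFromAbove (F : ℝ → ℝ) (a b x : ℝ) : Prop :=
  ∃ ε > 0, (∀ t ∈ Ioo (x - ε) x ∩ Icc a b, t < F t) ∧
    (∀ t ∈ Ioo x (x + ε) ∩ Icc a b, F t < t)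

theorem stmt_1
    (βlo βstar βhi : ℝ)
    (hlo : 0 < βlo) (hls : βlo < βstar) (hsh : βstar < βhi)
    (R : ℝ → ℝ → ℝ)
    (hRcont : ContinuousOn (fun p : ℝ × ℝ => R p.1 p.2) (Icc (0:ℝ) 1 ×ˢ Ici (0:ℝ)))
    (hR0 : ∀ h ∈ Icc (0:ℝ) 1, R h 0 = 0)
    (hR0' : ∀ β ∈ Ici (0:ℝ), R 0 β = 0)
    (hRβ : ∀ h ∈ Ioc (0:ℝ) 1, StrictMonoOn (fun β => R h β) (Ici 0))
    (hRh : ∀ β > (0:ℝ), StrictMonoOn (fun h => R h β) (Icc 0 1))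
    (hRid : ∀ h₁ h₂ β₁ β₂ : ℝ, 0 ≤ h₁ → h₁ < h₂ → h₂ ≤ 1 → 0 ≤ β₁ → β₁ < β₂ →
      R h₂ β₁ - R h₁ β₁ < R h₂ β₂ - R h₁ β₂)
    (H : ℝ → ℝ)
    (hHcont : ContinuousOn H (Ici 0))
    (hHmono : StrictMonoOn H (Ici 0))
    (hH0 : H 0 = 0)
    (hHin : ∀ β > (0:ℝ), H β ∈ Ioo (0:ℝ) 1)
    (Δ : ℝ) (hΔ : Δ < 0)
    (ψ : ℝ → ℝ)
    (hψ : ∀ β ∈ Icc βlo βhi,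
      ψ β ∈ Icc βlo βhi ∧
      ∀ x ∈ Icc βlo βhi, x ≠ ψ β →
        |Δ + R (H β) (ψ β) - R (H β) βstar| < |Δ + R (H β) x - R (H β) βstar|) :
    ∃ bhat ∈ Icc βlo βhi, ψ bhat = bhat ∧
      (∀ β' ∈ Icc βlo βhi, ψ β' = β' → β' = bhat) ∧
      βstar < bhat ∧
      CrossesFromAbove ψ βlo βhi bhat := by
  have hβs0 : (0:ℝ) < βstar := hlo.trans hls
  have hlh : βlo < βhi := hls.trans hsh
  have hposIcc : ∀ β ∈ Icc βlo βhi, 0 < β := fun β hβ => lt_of_lt_of_le hlo hβ.1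
  have hHmem : ∀ β ∈ Icc βlo βhi, H β ∈ Ioo (0:ℝ) 1 := fun β hβ => hHin β (hposIcc β hβ)
  let g : ℝ → ℝ → ℝ := fun β x => Δ + R (H β) x - R (H β) βstar
  have hψ' : ∀ β ∈ Icc βlo βhi, ψ β ∈ Icc βlo βhi ∧
      ∀ x ∈ Icc βlo βhi, x ≠ ψ β → |g β (ψ β)| < |g β x| := hψ
  have hgmono : ∀ β ∈ Icc βlo βhi, ∀ x, 0 ≤ x → ∀ y, 0 ≤ y → x < y → g β x < g β y := by
    intro β hβ x hx y hy hxy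
    have h1 := hRβ (H β) ⟨(hHmem β hβ).1, (hHmem β hβ).2.le⟩ hx hy hxy
    simp only at h1
    show Δ + R (H β) x - R (H β) βstar < Δ + R (H β) y - R (H β) βstar
    linarith
  have hgstar : ∀ β, g β βstar = Δ := by
    intro β
    show Δ + R (H β) βstar - R (H β) βstar = Δ
    ring
  have hgcont : ∀ β ∈ Icc βlo βhi, ContinuousOn (g β) (Ici 0) := by
    intro β hβ
    have hmap : MapsTo (fun x : ℝ => ((H β), x)) (Ici 0) (Icc (0:ℝ) 1 ×ˢ Ici 0) :=
      fun x hx => ⟨⟨(hHmem β hβ).1.le, (hHmem β hβ).2.le⟩, hx⟩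
    have h1 : ContinuousOn (fun x : ℝ => R (H β) x) (Ici 0) :=
      hRcont.comp (Continuous.continuousOn (by continuity)) hmap
    show ContinuousOn (fun x => Δ + R (H β) x - R (H β) βstar) (Ici 0)
    exact (continuousOn_const.add h1).sub continuousOn_const
  -- sign lemmas
  have Leq : ∀ β ∈ Icc βlo βhi, g β β = 0 → ψ β = β := by
    intro β hβ h0
    by_contra hne
    have hm := (hψ' β hβ).2 β hβ (fun h => hne h.symm)
    rw [h0, abs_zero] at hm
    exact absurd hm (not_lt.mpr (abs_nonneg _))
  have Llt : ∀ β ∈ Icc βlo βhi, g β β < 0 → β < βhi → β < ψ β := by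
    intro β hβ hneg hlt
    by_contra hcon
    push_neg at hcon
    have hψβ := (hψ' β hβ).1
    have hgψ : g β (ψ β) < 0 := by
      rcases eq_or_lt_of_le hcon with h | h
      · rw [h]; exact hneg
      · exact lt_trans (hgmono β hβ _ (hposIcc _ hψβ).le _ (hposIcc β hβ).le h) hneg
    by_cases hhi : g β βhi ≤ 0
    · have hne : βhi ≠ ψ β := fun h => absurd (h ▸ hcon) (not_le.mpr hlt)
      have hm := (hψ' β hβ).2 βhi ⟨hlh.le, le_refl _⟩ hne
      have h2 : g β (ψ β) < g β βhi :=
        hgmono β hβ _ (hposIcc _ hψβ).le _ (hlo.trans hlh).le (lt_of_le_of_lt hcon hlt)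
      rw [abs_of_neg hgψ, abs_of_nonpos hhi] at hm
      linarith
    · push_neg at hhi
      have hcont : ContinuousOn (g β) (Icc β βhi) :=
        (hgcont β hβ).mono (fun t ht => le_trans (hposIcc β hβ).le ht.1)
      have h0 : (0:ℝ) ∈ Icc (g β β) (g β βhi) := ⟨hneg.le, hhi.le⟩
      obtain ⟨x, hxmem, hx0⟩ := intermediate_value_Icc hlt.le hcont h0
      have hxIcc : x ∈ Icc βlo βhi := ⟨le_trans hβ.1 hxmem.1, hxmem.2⟩
      have hxne : x ≠ ψ β := fun h => by rw [← h] at hgψ; rw [hx0] at hgψ; exact lt_irrefl 0 hgψ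
      have hm := (hψ' β hβ).2 x hxIcc hxne
      rw [hx0, abs_zero] at hm
      exact absurd hm (not_lt.mpr (abs_nonneg _))
  have Lgt : ∀ β ∈ Icc βlo βhi, 0 < g β β → ψ β < β := by
    intro β hβ hpos
    by_contra hcon
    push_neg at hcon
    rcases eq_or_lt_of_le hcon with h | h
    · -- h : β = ψ β
      have hglo : g β βlo < 0 := by
        have h1 := hgmono β hβ βlo hlo.le βstar hβs0.le hls
        rw [hgstar] at h1
        linarith
      have hcont : ContinuousOn (g β) (Icc βlo β) :=
        (hgcont β hβ).mono (fun t ht => le_trans hlo.le ht.1)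
      have h0 : (0:ℝ) ∈ Icc (g β βlo) (g β β) := ⟨hglo.le, hpos.le⟩
      obtain ⟨x, hxmem, hx0⟩ := intermediate_value_Icc hβ.1 hcont h0
      have hxIcc : x ∈ Icc βlo βhi := ⟨hxmem.1, le_trans hxmem.2 hβ.2⟩
      have hxne : x ≠ ψ β := by
        intro hx
        rw [hx, ← h] at hx0
        rw [hx0] at hpos
        exact lt_irrefl 0 hpos
      have hm := (hψ' β hβ).2 x hxIcc hxne
      rw [hx0, abs_zero] at hm
      exact absurd hm (not_lt.mpr (abs_nonneg _))
    · have hne : β ≠ ψ β := ne_of_lt h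
      have hm := (hψ' β hβ).2 β hβ hne
      have h2 : g β β < g β (ψ β) :=
        hgmono β hβ β (hposIcc β hβ).le (ψ β) (hposIcc _ (hψ' β hβ).1).le h
      rw [abs_of_pos hpos, abs_of_pos (lt_trans hpos h2)] at hm
      linarith
  have Lhi : g βhi βhi < 0 → ψ βhi = βhi := by
    intro hneg
    by_contra hne
    have hmemhi : βhi ∈ Icc βlo βhi := ⟨hlh.le, le_refl _⟩
    have hψβ := (hψ' βhi hmemhi).1
    have hlt : ψ βhi < βhi := lt_of_le_of_ne hψβ.2 hne
    have h2 : g βhi (ψ βhi) < g βhi βhi :=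
      hgmono βhi hmemhi _ (hposIcc _ hψβ).le _ (hposIcc _ hmemhi).le hlt
    have hm := (hψ' βhi hmemhi).2 βhi hmemhi (fun h => hne h.symm)
    rw [abs_of_neg (lt_trans h2 hneg), abs_of_neg hneg] at hm
    linarith
  -- the "phi" map β ↦ g β β
  have hφneg : ∀ β ∈ Icc βlo βhi, β ≤ βstar → g β β < 0 := by
    intro β hβ hle
    rcases eq_or_lt_of_le hle with h | h
    · rw [h, hgstar]; exact hΔ
    · have h1 : g β β < g β βstar := hgmono β hβ β (hposIcc β hβ).le βstar hβs0.le h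
      rw [hgstar] at h1
      linarith
  have hφmono : ∀ β₁ ∈ Icc βstar βhi, ∀ β₂ ∈ Icc βstar βhi, β₁ < β₂ → g β₁ β₁ < g β₂ β₂ := by
    intro β₁ hβ₁ β₂ hβ₂ h12
    have hb1 : β₁ ∈ Icc βlo βhi := ⟨hls.le.trans hβ₁.1, hβ₁.2⟩
    have hb2 : β₂ ∈ Icc βlo βhi := ⟨hls.le.trans hβ₂.1, hβ₂.2⟩
    have step1 : g β₂ β₁ < g β₂ β₂ :=
      hgmono β₂ hb2 β₁ (hposIcc β₁ hb1).le β₂ (hposIcc β₂ hb2).le h12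
    have step2 : g β₁ β₁ ≤ g β₂ β₁ := by
      rcases eq_or_lt_of_le hβ₁.1 with h | h
      · rw [← h, hgstar, hgstar]
      · have hH12 : H β₁ < H β₂ := hHmono (hposIcc β₁ hb1).le (hposIcc β₂ hb2).le h12
        have hid := hRid (H β₁) (H β₂) βstar β₁ (hHmem β₁ hb1).1.le hH12
          (hHmem β₂ hb2).2.le hβs0.le h
        show Δ + R (H β₁) β₁ - R (H β₁) βstar ≤ Δ + R (H β₂) β₁ - R (H β₂) βstar
        linarith
    linarith
  have hφcont : ContinuousOn (fun β => g β β) (Icc βstar βhi) := by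
    have hsub : Icc βstar βhi ⊆ Ici (0:ℝ) := fun t ht => (hβs0.trans_le ht.1).le
    have hHin' : ∀ β ∈ Icc βstar βhi, H β ∈ Ioo (0:ℝ) 1 :=
      fun β hβ => hHin β (hβs0.trans_le hβ.1)
    have hmap : MapsTo (fun β : ℝ => (H β, β)) (Icc βstar βhi) (Icc (0:ℝ) 1 ×ˢ Ici 0) :=
      fun β hβ => ⟨⟨(hHin' β hβ).1.le, (hHin' β hβ).2.le⟩, hsub hβ⟩
    have h1 : ContinuousOn (fun β : ℝ => R (H β) β) (Icc βstar βhi) :=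
      hRcont.comp ((hHcont.mono hsub).prodMk continuousOn_id) hmap
    have hmap2 : MapsTo (fun β : ℝ => (H β, βstar)) (Icc βstar βhi) (Icc (0:ℝ) 1 ×ˢ Ici 0) :=
      fun β hβ => ⟨⟨(hHin' β hβ).1.le, (hHin' β hβ).2.le⟩, hβs0.le⟩
    have h2 : ContinuousOn (fun β : ℝ => R (H β) βstar) (Icc βstar βhi) :=
      hRcont.comp ((hHcont.mono hsub).prodMk continuousOn_const) hmap2
    show ContinuousOn (fun β => Δ + R (H β) β - R (H β) βstar) (Icc βstar βhi)
    exact (continuousOn_const.add h1).sub h2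
  -- assembly helper
  have main : ∀ bhat ∈ Icc βlo βhi, ψ bhat = bhat → βstar < bhat →
      (∀ t ∈ Icc βlo βhi, t < bhat → t < ψ t) →
      (∀ t ∈ Icc βlo βhi, bhat < t → ψ t < t) →
      ∃ bhat ∈ Icc βlo βhi, ψ bhat = bhat ∧
        (∀ β' ∈ Icc βlo βhi, ψ β' = β' → β' = bhat) ∧
        βstar < bhat ∧ CrossesFromAbove ψ βlo βhi bhat := by
    intro bhat hmem hfix hst hbelow habove
    refine ⟨bhat, hmem, hfix, ?_, hst, 1, one_pos, ?_, ?_⟩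
    · intro β' hβ' hfix'
      by_contra hne
      rcases lt_or_gt_of_ne hne with h | h
      · have := hbelow β' hβ' h; linarith [hfix'.le, hfix'.ge]
      · have := habove β' hβ' h; linarith [hfix'.le, hfix'.ge]
    · rintro t ⟨⟨_, hlt⟩, hIcc⟩
      exact hbelow t hIcc hlt
    · rintro t ⟨⟨hlt, _⟩, hIcc⟩
      exact habove t hIcc hlt
  by_cases hcase : g βhi βhi ≤ 0
  · have hmemhi : βhi ∈ Icc βlo βhi := ⟨hlh.le, le_refl _⟩
    have hfix : ψ βhi = βhi := by
      rcases eq_or_lt_of_le hcase with h | h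
      · exact Leq βhi hmemhi (by rw [← h])
      · exact Lhi h
    refine main βhi hmemhi hfix hsh ?_ ?_
    · intro t ht hlt
      have hφt : g t t < 0 := by
        rcases le_or_gt t βstar with h | h
        · exact hφneg t ht h
        · have := hφmono t ⟨h.le, ht.2⟩ βhi ⟨hsh.le, le_refl _⟩ hlt
          linarith
      exact Llt t ht hφt hlt
    · intro t ht hlt
      exact absurd ht.2 (not_le.mpr hlt)
  · push_neg at hcase
    have e : g βstar βstar = Δ := hgstar βstar
    have hcont := hφcont
    have h0 : (0:ℝ) ∈ Icc (g βstar βstar) (g βhi βhi) := ⟨by rw [e]; exact hΔ.le, hcase.le⟩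
    obtain ⟨bhat, hbmem, hb0⟩ := intermediate_value_Icc hsh.le hcont h0
    simp only at hb0
    have hmem : bhat ∈ Icc βlo βhi := ⟨hls.le.trans hbmem.1, hbmem.2⟩
    have hst : βstar < bhat := by
      rcases eq_or_lt_of_le hbmem.1 with h | h
      · exfalso; rw [← h] at hb0; rw [e] at hb0; exact absurd hb0 (ne_of_lt hΔ)
      · exact h
    have hfix : ψ bhat = bhat := Leq bhat hmem hb0
    refine main bhat hmem hfix hst ?_ ?_
    · intro t ht hlt
      have hφt : g t t < 0 := by
        rcases le_or_gt t βstar with h | h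
        · exact hφneg t ht h
        · have := hφmono t ⟨h.le, ht.2⟩ bhat ⟨hbmem.1, hbmem.2⟩ hlt
          linarith [hb0]
      exact Llt t ht hφt (lt_of_lt_of_le hlt hbmem.2)
    · intro t ht hlt
      have := hφmono bhat hbmem t ⟨hbmem.1.trans hlt.le, ht.2⟩ hlt
      have hφt : 0 < g t t := by linarith [hb0]
      exact Lgt t ht hφt
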